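/- arXiv:1904.05590 — 3 statements merged into one kernel-verified Lean document; each statement's English description precedes it below -/
import Mathlib

section
/- For a real m×n matrix A and integer k with 1 ≤ k ≤ min(m,n), the equality ‖A‖_{k,2}^⋆ = ‖A‖_F holds if and only if rank(A) ≤ k. -/
open Matrix

/-- Singular values of a real `m × n` matrix, sorted in decreasing order
(indexed by `Fin n`; `σ i = sqrt` of the `i`-th largest eigenvalue of `Aᵀ * A`). -/
noncomputable def svalsDesc {m n : ℕ} (A : Matrix (Fin m) (Fin n) ℝ) : Fin n → ℝ :=
  fun i =>
    Real.sqrt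
      (((Matrix.isHermitian_conjTranspose_mul_self A).eigenvalues ∘
        Tuple.sort (Matrix.isHermitian_conjTranspose_mul_self A).eigenvalues) i.rev)

/-- Ky Fan 2-k-norm: `(∑_{i=1}^k σ_i(A)²)^{1/2}`. -/
noncomputable def kyFan2 {m n : ℕ} (k : ℕ) (A : Matrix (Fin m) (Fin n) ℝ) : ℝ :=
  Real.sqrt (∑ i ∈ Finset.univ.filter (fun i : Fin n => (i : ℕ) < k), (svalsDesc A i) ^ 2)

/-- Frobenius inner product `⟨A, B⟩ = trace (Aᵀ B)`. -/
noncomputable def frobInner {m n : ℕ} (A B : Matrix (Fin m) (Fin n) ℝ) : ℝ :=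
  ∑ i, ∑ j, A i j * B i j

/-- Frobenius norm. -/
noncomputable def frobNorm {m n : ℕ} (A : Matrix (Fin m) (Fin n) ℝ) : ℝ :=
  Real.sqrt (∑ i, ∑ j, (A i j) ^ 2)

/-- Dual Ky Fan 2-k-norm `‖A‖_{k,2}^⋆ = max {⟨A,X⟩ : ‖X‖_{k,2} ≤ 1}`. -/
noncomputable def kyFan2Dual {m n : ℕ} (k : ℕ) (A : Matrix (Fin m) (Fin n) ℝ) : ℝ :=
  sSup {c : ℝ | ∃ X : Matrix (Fin m) (Fin n) ℝ, kyFan2 k X ≤ 1 ∧ c = frobInner A X}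

/-- The linear map `𝒜` satisfies the restricted isometry inequality with constant `δ`
for all matrices of rank at most `r`. -/
def HasRIP {m n p : ℕ} (𝒜 : Matrix (Fin m) (Fin n) ℝ →ₗ[ℝ] EuclideanSpace ℝ (Fin p))
    (r : ℕ) (δ : ℝ) : Prop :=
  ∀ X : Matrix (Fin m) (Fin n) ℝ, X.rank ≤ r →
    (1 - δ) * frobNorm X ≤ ‖𝒜 X‖ ∧ ‖𝒜 X‖ ≤ (1 + δ) * frobNorm X

open Matrix Finset

namespace KFAux

variable {m n : ℕ}

noncomputable def eigs (A : Matrix (Fin m) (Fin n) ℝ) : Fin n → ℝ :=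
  (Matrix.isHermitian_conjTranspose_mul_self A).eigenvalues

noncomputable def e (A : Matrix (Fin m) (Fin n) ℝ) : Equiv.Perm (Fin n) :=
  Fin.revPerm.trans (Tuple.sort (eigs A))

noncomputable def lam (A : Matrix (Fin m) (Fin n) ℝ) : Fin n → ℝ :=
  fun i => eigs A (e A i)

lemma posSemidef_tmul (A : Matrix (Fin m) (Fin n) ℝ) : (Aᵀ * A).PosSemidef := by
  have := Matrix.posSemidef_conjTranspose_mul_self A
  rwa [Matrix.conjTranspose_eq_transpose_of_trivial] at this

lemma eigs_nonneg (A : Matrix (Fin m) (Fin n) ℝ) (i : Fin n) : 0 ≤ eigs A i :=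
  (posSemidef_tmul A).eigenvalues_nonneg i

lemma lam_nonneg (A : Matrix (Fin m) (Fin n) ℝ) (i : Fin n) : 0 ≤ lam A i :=
  eigs_nonneg A _

lemma lam_antitone (A : Matrix (Fin m) (Fin n) ℝ) : Antitone (lam A) := by
  intro i j hij
  have := Tuple.monotone_sort (eigs A) (Fin.rev_le_rev.mpr hij)
  simpa [lam, e, Function.comp] using this

lemma svalsDesc_eq (A : Matrix (Fin m) (Fin n) ℝ) (i : Fin n) :
    svalsDesc A i = Real.sqrt (lam A i) := rfl

lemma svalsDesc_sq (A : Matrix (Fin m) (Fin n) ℝ) (i : Fin n) :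
    svalsDesc A i ^ 2 = lam A i := by
  rw [svalsDesc_eq, Real.sq_sqrt (lam_nonneg A i)]

lemma sum_lam (A : Matrix (Fin m) (Fin n) ℝ) :
    ∑ i, lam A i = ∑ i, eigs A i :=
  Equiv.sum_comp (e A) (eigs A)

/-- spectral theorem for `Aᵀ*A` over ℝ -/
lemma spectral (A : Matrix (Fin m) (Fin n) ℝ) :
    Aᵀ * A = ((Matrix.isHermitian_conjTranspose_mul_self A).eigenvectorUnitary :
        Matrix (Fin n) (Fin n) ℝ) * Matrix.diagonal (eigs A) *
      star ((Matrix.isHermitian_conjTranspose_mul_self A).eigenvectorUnitary :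
        Matrix (Fin n) (Fin n) ℝ) := by
  have := (Matrix.isHermitian_conjTranspose_mul_self A).spectral_theorem
  simpa [RCLike.ofReal_real_eq_id, eigs] using this


lemma unitary_mul_star (A : Matrix (Fin m) (Fin n) ℝ) :
    ((Matrix.isHermitian_conjTranspose_mul_self A).eigenvectorUnitary :
      Matrix (Fin n) (Fin n) ℝ) *
    star ((Matrix.isHermitian_conjTranspose_mul_self A).eigenvectorUnitary :
      Matrix (Fin n) (Fin n) ℝ) = 1 :=
  (Matrix.mem_unitaryGroup_iff).mp
    ((Matrix.isHermitian_conjTranspose_mul_self A).eigenvectorUnitary).2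

lemma unitary_star_mul (A : Matrix (Fin m) (Fin n) ℝ) :
    star ((Matrix.isHermitian_conjTranspose_mul_self A).eigenvectorUnitary :
      Matrix (Fin n) (Fin n) ℝ) *
    ((Matrix.isHermitian_conjTranspose_mul_self A).eigenvectorUnitary :
      Matrix (Fin n) (Fin n) ℝ) = 1 :=
  (Matrix.mem_unitaryGroup_iff').mp
    ((Matrix.isHermitian_conjTranspose_mul_self A).eigenvectorUnitary).2

lemma sum_eigs_eq_trace (A : Matrix (Fin m) (Fin n) ℝ) :
    ∑ i, eigs A i = Matrix.trace (Aᵀ * A) := by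
  conv_rhs => rw [spectral A]
  rw [Matrix.trace_mul_cycle, unitary_star_mul, Matrix.one_mul, Matrix.trace_diagonal]

lemma trace_tmul (A B : Matrix (Fin m) (Fin n) ℝ) :
    Matrix.trace (Aᵀ * B) = ∑ i, ∑ j, A i j * B i j := by
  rw [Finset.sum_comm]
  simp [Matrix.trace, Matrix.diag, Matrix.mul_apply, Matrix.transpose_apply]

lemma sum_sq_eq_sum_lam (A : Matrix (Fin m) (Fin n) ℝ) :
    ∑ i, ∑ j, A i j ^ 2 = ∑ i, lam A i := by
  rw [sum_lam, sum_eigs_eq_trace, trace_tmul]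
  simp [pow_two]

lemma frobNorm_eq (A : Matrix (Fin m) (Fin n) ℝ) :
    frobNorm A = Real.sqrt (∑ i, lam A i) := by
  rw [frobNorm, sum_sq_eq_sum_lam]

lemma frobNorm_nonneg (A : Matrix (Fin m) (Fin n) ℝ) : 0 ≤ frobNorm A :=
  Real.sqrt_nonneg _

lemma kyFan2_eq (k : ℕ) (A : Matrix (Fin m) (Fin n) ℝ) :
    kyFan2 k A =
      Real.sqrt (∑ i ∈ Finset.univ.filter (fun i : Fin n => (i : ℕ) < k), lam A i) := by
  rw [kyFan2]
  congr 1
  exact Finset.sum_congr rfl fun i _ => svalsDesc_sq A i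

lemma kyFan2_nonneg (k : ℕ) (A : Matrix (Fin m) (Fin n) ℝ) : 0 ≤ kyFan2 k A :=
  Real.sqrt_nonneg _

lemma kyFan2_sq (k : ℕ) (A : Matrix (Fin m) (Fin n) ℝ) :
    kyFan2 k A ^ 2 = ∑ i ∈ Finset.univ.filter (fun i : Fin n => (i : ℕ) < k), lam A i := by
  rw [kyFan2_eq, Real.sq_sqrt]
  exact Finset.sum_nonneg fun i _ => lam_nonneg A i

lemma frobNorm_sq (A : Matrix (Fin m) (Fin n) ℝ) :
    frobNorm A ^ 2 = ∑ i, lam A i := by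
  rw [frobNorm_eq, Real.sq_sqrt]
  exact Finset.sum_nonneg fun i _ => lam_nonneg A i

lemma kyFan2_le_frobNorm (k : ℕ) (A : Matrix (Fin m) (Fin n) ℝ) :
    kyFan2 k A ≤ frobNorm A := by
  rw [kyFan2_eq, frobNorm_eq]
  exact Real.sqrt_le_sqrt (Finset.sum_le_sum_of_subset_of_nonneg (Finset.filter_subset _ _)
    (fun i _ _ => lam_nonneg A i))

lemma frobInner_eq_trace (A B : Matrix (Fin m) (Fin n) ℝ) :
    frobInner A B = Matrix.trace (Aᵀ * B) := by
  rw [trace_tmul, frobInner]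

lemma frobInner_self (A : Matrix (Fin m) (Fin n) ℝ) :
    frobInner A A = frobNorm A ^ 2 := by
  rw [frobInner, frobNorm, Real.sq_sqrt (by positivity)]
  simp [pow_two]

lemma frobInner_le_frobNorm_mul (A B : Matrix (Fin m) (Fin n) ℝ) :
    frobInner A B ≤ frobNorm A * frobNorm B := by
  rw [frobInner, frobNorm, frobNorm]
  have hCS : (∑ i, ∑ j, A i j * B i j) ^ 2 ≤
      (∑ i, ∑ j, A i j ^ 2) * (∑ i, ∑ j, B i j ^ 2) := by
    have h1 : (∑ i, ∑ j, A i j * B i j) = ∑ p : Fin m × Fin n, A p.1 p.2 * B p.1 p.2 :=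
      (Fintype.sum_prod_type (f := fun p => A p.1 p.2 * B p.1 p.2)).symm
    have h2 : (∑ i, ∑ j, A i j ^ 2) = ∑ p : Fin m × Fin n, A p.1 p.2 ^ 2 :=
      (Fintype.sum_prod_type (f := fun p => A p.1 p.2 ^ 2)).symm
    have h3 : (∑ i, ∑ j, B i j ^ 2) = ∑ p : Fin m × Fin n, B p.1 p.2 ^ 2 :=
      (Fintype.sum_prod_type (f := fun p => B p.1 p.2 ^ 2)).symm
    rw [h1, h2, h3]
    exact Finset.sum_mul_sq_le_sq_mul_sq _ _ _
  calc ∑ i, ∑ j, A i j * B i j ≤ |∑ i, ∑ j, A i j * B i j| := le_abs_self _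
    _ = Real.sqrt ((∑ i, ∑ j, A i j * B i j) ^ 2) := (Real.sqrt_sq_eq_abs _).symm
    _ ≤ Real.sqrt ((∑ i, ∑ j, A i j ^ 2) * (∑ i, ∑ j, B i j ^ 2)) := Real.sqrt_le_sqrt hCS
    _ = _ := Real.sqrt_mul (by positivity) _

lemma card_filter_lt (n k : ℕ) :
    (Finset.univ.filter fun i : Fin n => (i : ℕ) < k).card = min k n := by
  rcases le_total n k with h | h
  · rw [min_eq_right h]
    rw [Finset.filter_true_of_mem (fun i _ => lt_of_lt_of_le i.isLt h)]
    simp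
  · rw [min_eq_left h]
    have : (Finset.univ.filter fun i : Fin n => (i : ℕ) < k) =
        Finset.map (Fin.castLEEmb h) Finset.univ := by
      ext i
      simp only [Finset.mem_filter, Finset.mem_univ, true_and, Finset.mem_map,
        Fin.castLEEmb, Function.Embedding.coeFn_mk]
      constructor
      · intro hi
        exact ⟨⟨(i : ℕ), hi⟩, rfl⟩
      · rintro ⟨j, rfl⟩
        exact j.isLt
    rw [this, Finset.card_map, Finset.card_univ, Fintype.card_fin]

/-- bathtub principle -/
lemma bathtub {n k : ℕ} (lm t : Fin n → ℝ) (hanti : Antitone lm) (h0 : ∀ i, 0 ≤ lm i)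
    (ht0 : ∀ i, 0 ≤ t i) (ht1 : ∀ i, t i ≤ 1) (hsum : ∑ i, t i ≤ (k : ℝ)) :
    ∑ i, lm i * t i ≤ ∑ i ∈ Finset.univ.filter (fun i : Fin n => (i : ℕ) < k), lm i := by
  rcases le_or_gt n k with h | h
  · rw [Finset.filter_true_of_mem (fun i _ => lt_of_lt_of_le i.isLt h)]
    refine Finset.sum_le_sum fun i _ => ?_
    calc lm i * t i ≤ lm i * 1 := mul_le_mul_of_nonneg_left (ht1 i) (h0 i)
      _ = lm i := mul_one _
  · set F := Finset.univ.filter fun i : Fin n => (i : ℕ) < k with hF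
    set c := lm ⟨k, h⟩ with hc
    have hcard : (F.card : ℝ) = k := by
      rw [hF, card_filter_lt, min_eq_left h.le]
    have key : ∑ i, lm i * t i ≤ ∑ i ∈ F, lm i + c * (∑ i, t i - F.card) := by
      rw [← Finset.sum_filter_add_sum_filter_not Finset.univ (fun i : Fin n => (i : ℕ) < k)
        (fun i => lm i * t i)]
      have h1 : ∑ i ∈ F, lm i * t i ≤ ∑ i ∈ F, (lm i + c * (t i - 1)) := by
        refine Finset.sum_le_sum fun i hi => ?_
        have hci : c ≤ lm i := by
          apply hanti
          have := (Finset.mem_filter.mp hi).2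
          exact le_of_lt (by exact_mod_cast this)
        nlinarith [ht1 i, ht0 i]
      have h2 : ∑ i ∈ Finset.univ.filter (fun i : Fin n => ¬ (i : ℕ) < k), lm i * t i ≤
          ∑ i ∈ Finset.univ.filter (fun i : Fin n => ¬ (i : ℕ) < k), c * t i := by
        refine Finset.sum_le_sum fun i hi => ?_
        have : lm i ≤ c := by
          apply hanti
          have := (Finset.mem_filter.mp hi).2
          exact le_of_not_gt (fun hlt => this (by exact_mod_cast hlt))
        exact mul_le_mul_of_nonneg_right this (ht0 i)
      have h3 : ∑ i ∈ F, (lm i + c * (t i - 1)) +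
          ∑ i ∈ Finset.univ.filter (fun i : Fin n => ¬ (i : ℕ) < k), c * t i =
          ∑ i ∈ F, lm i + c * (∑ i, t i - F.card) := by
        rw [Finset.sum_add_distrib]
        have : ∑ i ∈ F, c * (t i - 1) +
            ∑ i ∈ Finset.univ.filter (fun i : Fin n => ¬ (i : ℕ) < k), c * t i =
            c * (∑ i, t i - F.card) := by
          rw [← Finset.mul_sum, ← Finset.mul_sum, ← mul_add]
          congr 1
          rw [Finset.sum_sub_distrib]
          simp only [Finset.sum_const, nsmul_eq_mul, mul_one]
          rw [sub_add_eq_add_sub,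
            Finset.sum_filter_add_sum_filter_not Finset.univ (fun i : Fin n => (i : ℕ) < k) t]
        linarith [this]
      linarith [h1, h2, h3.ge]
    have hc0 : 0 ≤ c := h0 _
    calc ∑ i, lm i * t i ≤ ∑ i ∈ F, lm i + c * (∑ i, t i - F.card) := key
      _ ≤ ∑ i ∈ F, lm i := by
          have : ∑ i, t i - (F.card : ℝ) ≤ 0 := by rw [hcard]; linarith
          nlinarith
noncomputable def U (X : Matrix (Fin m) (Fin n) ℝ) : Matrix (Fin n) (Fin n) ℝ :=
  ((Matrix.isHermitian_conjTranspose_mul_self X).eigenvectorUnitary : Matrix (Fin n) (Fin n) ℝ)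

lemma spectral' (X : Matrix (Fin m) (Fin n) ℝ) :
    Xᵀ * X = U X * Matrix.diagonal (eigs X) * star (U X) := spectral X

lemma U_mul_star (X : Matrix (Fin m) (Fin n) ℝ) : U X * star (U X) = 1 := unitary_mul_star X

lemma star_mul_U (X : Matrix (Fin m) (Fin n) ℝ) : star (U X) * U X = 1 := unitary_star_mul X

lemma U_cancel (X : Matrix (Fin m) (Fin n) ℝ) (Z : Matrix (Fin n) (Fin n) ℝ) :
    U X * (star (U X) * Z) = Z := by
  rw [← Matrix.mul_assoc, U_mul_star, Matrix.one_mul]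

/-- Core Ky Fan bound: `trace (XᵀX P) ≤ ∑_{i<k} λ_i(XᵀX)` for `P` a symmetric idempotent
with trace at most `k`. -/
lemma trace_proj_le (k : ℕ) (X : Matrix (Fin m) (Fin n) ℝ) (P : Matrix (Fin n) (Fin n) ℝ)
    (hsym : star P = P) (hidem : P * P = P) (htr : Matrix.trace P ≤ (k : ℝ)) :
    Matrix.trace (Xᵀ * X * P) ≤
      ∑ i ∈ Finset.univ.filter (fun i : Fin n => (i : ℕ) < k), lam X i := by
  obtain ⟨u, hspec, hums, hsmu⟩ :
      ∃ u : Matrix (Fin n) (Fin n) ℝ, Xᵀ * X = u * Matrix.diagonal (eigs X) * star u ∧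
        u * star u = 1 ∧ star u * u = 1 :=
    ⟨U X, spectral' X, U_mul_star X, star_mul_U X⟩
  have hcancel : ∀ Z : Matrix (Fin n) (Fin n) ℝ, u * (star u * Z) = Z := by
    intro Z
    rw [← Matrix.mul_assoc, hums, Matrix.one_mul]
  set Q := star u * P * u with hQ
  have hQsym : star Q = Q := by
    rw [hQ]
    calc star (star u * P * u) = star u * (star P * star (star u)) := by
          rw [Matrix.star_mul, Matrix.star_mul]
      _ = star u * P * u := by rw [hsym, star_star, ← Matrix.mul_assoc]
  have hQidem : Q * Q = Q := by
    rw [hQ]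
    calc star u * P * u * (star u * P * u)
        = star u * P * (u * (star u * (P * u))) := by
          simp only [Matrix.mul_assoc]
      _ = star u * P * (P * u) := by rw [hcancel]
      _ = star u * (P * P) * u := by simp only [Matrix.mul_assoc]
      _ = star u * P * u := by rw [hidem]
  have hQQ : ∀ a b, Q a b = Q b a := by
    intro a b
    conv_lhs => rw [← hQsym]
    simp [Matrix.star_apply]
  have hq0 : ∀ i, 0 ≤ Q i i := by
    intro i
    have : Q i i = ∑ j, Q i j ^ 2 := by
      conv_lhs => rw [← hQidem]
      rw [Matrix.mul_apply]
      exact Finset.sum_congr rfl fun j _ => by rw [hQQ j i, pow_two]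
    rw [this]; positivity
  have hq1 : ∀ i, Q i i ≤ 1 := by
    intro i
    have hsq : Q i i = ∑ j, Q i j ^ 2 := by
      conv_lhs => rw [← hQidem]
      rw [Matrix.mul_apply]
      exact Finset.sum_congr rfl fun j _ => by rw [hQQ j i, pow_two]
    have hle : Q i i ^ 2 ≤ Q i i := by
      conv_rhs => rw [hsq]
      exact Finset.single_le_sum (f := fun j => Q i j ^ 2) (fun j _ => sq_nonneg _)
        (Finset.mem_univ i)
    nlinarith [hq0 i]
  have hqsum : ∑ i, Q i i = Matrix.trace P := by
    have h0 : ∑ i, Q i i = Matrix.trace Q := rfl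
    rw [h0, hQ, Matrix.trace_mul_cycle, hums, Matrix.one_mul]
  have htrace : Matrix.trace (Xᵀ * X * P) = ∑ i, eigs X i * Q i i := by
    rw [hspec]
    have h1 : u * Matrix.diagonal (eigs X) * star u * P =
        u * (Matrix.diagonal (eigs X) * (star u * P)) := by simp only [Matrix.mul_assoc]
    rw [h1, Matrix.trace_mul_comm, Matrix.mul_assoc]
    have h2 : Matrix.trace (Matrix.diagonal (eigs X) * (star u * P * u)) =
        ∑ i, eigs X i * (star u * P * u) i i := by
      simp [Matrix.trace, Matrix.diag, Matrix.diagonal_mul]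
    rw [h2]
  rw [htrace]
  have hre : ∑ i, eigs X i * Q i i = ∑ i, lam X i * Q (e X i) (e X i) :=
    (Equiv.sum_comp (e X) (fun i => eigs X i * Q i i)).symm
  rw [hre]
  refine bathtub (lam X) (fun i => Q (e X i) (e X i)) (lam_antitone X) (lam_nonneg X)
    (fun i => hq0 _) (fun i => hq1 _) ?_
  calc ∑ i, Q (e X i) (e X i) = ∑ i, Q i i :=
        Equiv.sum_comp (e X) (fun i => Q i i)
    _ = Matrix.trace P := hqsum
    _ ≤ (k : ℝ) := htr
lemma star_diagonal (d : Fin n → ℝ) : star (Matrix.diagonal d) = Matrix.diagonal d := by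
  rw [Matrix.star_eq_conjTranspose, Matrix.diagonal_conjTranspose]
  have : star d = d := by
    funext j
    exact star_trivial _
  rw [this]

/-- properties of spectral projections `u * diagonal d * star u` (generic form) -/
lemma proj_diag_props_gen (u : Matrix (Fin n) (Fin n) ℝ) (nu d : Fin n → ℝ)
    (hums : u * star u = 1) (hsmu : star u * u = 1)
    (hd : ∀ j, d j * d j = d j) :
    star (u * Matrix.diagonal d * star u) = u * Matrix.diagonal d * star u ∧
    (u * Matrix.diagonal d * star u) * (u * Matrix.diagonal d * star u) =
      u * Matrix.diagonal d * star u ∧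
    Matrix.trace (u * Matrix.diagonal d * star u) = ∑ j, d j ∧
    Matrix.trace ((u * Matrix.diagonal nu * star u) * (u * Matrix.diagonal d * star u)) =
      ∑ j, nu j * d j := by
  have hcancel : ∀ Z : Matrix (Fin n) (Fin n) ℝ, star u * (u * Z) = Z := by
    intro Z
    rw [← Matrix.mul_assoc, hsmu, Matrix.one_mul]
  have hDD : Matrix.diagonal d * Matrix.diagonal d = Matrix.diagonal d := by
    rw [Matrix.diagonal_mul_diagonal]
    exact congrArg Matrix.diagonal (funext hd)
  refine ⟨?_, ?_, ?_, ?_⟩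
  · calc star (u * Matrix.diagonal d * star u)
        = star (star u) * (star (Matrix.diagonal d) * star u) := by
          rw [Matrix.star_mul, Matrix.star_mul]
      _ = u * Matrix.diagonal d * star u := by
          rw [star_star, star_diagonal, ← Matrix.mul_assoc]
  · calc u * Matrix.diagonal d * star u * (u * Matrix.diagonal d * star u)
        = u * (Matrix.diagonal d * (star u * (u * (Matrix.diagonal d * star u)))) := by
          simp only [Matrix.mul_assoc]
      _ = u * (Matrix.diagonal d * (Matrix.diagonal d * star u)) := by rw [hcancel]
      _ = u * (Matrix.diagonal d * Matrix.diagonal d) * star u := by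
          simp only [Matrix.mul_assoc]
      _ = u * Matrix.diagonal d * star u := by rw [hDD]
  · rw [Matrix.trace_mul_cycle, hsmu, Matrix.one_mul, Matrix.trace_diagonal]
  · have hkey : (u * Matrix.diagonal nu * star u) * (u * Matrix.diagonal d * star u) =
        u * (Matrix.diagonal nu * Matrix.diagonal d) * star u := by
      calc u * Matrix.diagonal nu * star u * (u * Matrix.diagonal d * star u)
          = u * (Matrix.diagonal nu * (star u * (u * (Matrix.diagonal d * star u)))) := by
            simp only [Matrix.mul_assoc]
        _ = u * (Matrix.diagonal nu * (Matrix.diagonal d * star u)) := by rw [hcancel]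
        _ = u * (Matrix.diagonal nu * Matrix.diagonal d) * star u := by
            simp only [Matrix.mul_assoc]
    rw [hkey, Matrix.trace_mul_cycle, hsmu, Matrix.one_mul, Matrix.diagonal_mul_diagonal,
      Matrix.trace_diagonal]

/-- Attainment: there is a projection realizing the top-`k` eigenvalue sum. -/
lemma exists_proj_attain (k : ℕ) (X : Matrix (Fin m) (Fin n) ℝ) :
    ∃ P : Matrix (Fin n) (Fin n) ℝ, star P = P ∧ P * P = P ∧
      Matrix.trace P ≤ (k : ℝ) ∧
      Matrix.trace (Xᵀ * X * P) =
        ∑ i ∈ Finset.univ.filter (fun i : Fin n => (i : ℕ) < k), lam X i := by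
  classical
  set d : Fin n → ℝ := fun j => if (((e X).symm j : Fin n) : ℕ) < k then 1 else 0 with hdd
  have hd : ∀ j, d j * d j = d j := by
    intro j
    by_cases h : (((e X).symm j : Fin n) : ℕ) < k <;> simp [hdd, h]
  obtain ⟨h1, h2, h3, h4⟩ := proj_diag_props_gen (U X) (eigs X) d (U_mul_star X)
    (star_mul_U X) hd
  refine ⟨U X * Matrix.diagonal d * star (U X), h1, h2, ?_, ?_⟩
  · rw [h3]
    have heq : ∑ j, d j = ∑ i : Fin n, (if (i : ℕ) < k then (1 : ℝ) else 0) := by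
      rw [← Equiv.sum_comp (e X) d]
      refine Finset.sum_congr rfl fun i _ => ?_
      simp [hdd]
    rw [heq, Finset.sum_boole, card_filter_lt]
    exact_mod_cast min_le_left k n
  · rw [← spectral' X] at h4
    rw [h4, ← Equiv.sum_comp (e X) (fun j => eigs X j * d j)]
    rw [Finset.sum_filter]
    refine Finset.sum_congr rfl fun i _ => ?_
    by_cases h : (i : ℕ) < k <;> simp [hdd, h, lam]

lemma rank_eq_card (A : Matrix (Fin m) (Fin n) ℝ) :
    A.rank = (Finset.univ.filter fun j : Fin n => eigs A j ≠ 0).card := by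
  have h1 := (Matrix.isHermitian_conjTranspose_mul_self A).rank_eq_card_non_zero_eigs
  have h2 : (Aᴴ * A).rank = A.rank := by
    rw [Matrix.conjTranspose_eq_transpose_of_trivial, Matrix.rank_transpose_mul_self]
  rw [← h2, h1, Fintype.card_subtype]
  rfl

lemma eigs_eq_lam_symm (A : Matrix (Fin m) (Fin n) ℝ) (j : Fin n) :
    eigs A j = lam A ((e A).symm j) := by
  rw [lam, Equiv.apply_symm_apply]

/-- A projection of trace `rank A` fixing `A` on the right. -/
lemma exists_proj_fix (A : Matrix (Fin m) (Fin n) ℝ) :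
    ∃ P : Matrix (Fin n) (Fin n) ℝ, star P = P ∧ P * P = P ∧
      A * P = A ∧ Matrix.trace P = (A.rank : ℝ) := by
  classical
  set d : Fin n → ℝ := fun j => if eigs A j = 0 then 0 else 1 with hdd
  have hd : ∀ j, d j * d j = d j := by
    intro j
    by_cases h : eigs A j = 0 <;> simp [hdd, h]
  obtain ⟨h1, h2, h3, h4⟩ := proj_diag_props_gen (U A) (eigs A) d (U_mul_star A)
    (star_mul_U A) hd
  have hstarU : star (U A) * (Aᵀ * A) * U A = Matrix.diagonal (eigs A) := by
    have hc : ∀ Z : Matrix (Fin n) (Fin n) ℝ, star (U A) * (U A * Z) = Z := by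
      intro Z
      rw [← Matrix.mul_assoc, star_mul_U A, Matrix.one_mul]
    calc star (U A) * (Aᵀ * A) * U A
        = star (U A) * (U A * Matrix.diagonal (eigs A) * star (U A)) * U A := by
          rw [← spectral' A]
      _ = star (U A) * (U A * (Matrix.diagonal (eigs A) * (star (U A) * U A))) := by
          simp only [Matrix.mul_assoc]
      _ = Matrix.diagonal (eigs A) := by
          rw [star_mul_U A, Matrix.mul_one, hc]
  have hcol : ∀ j, eigs A j = 0 → ∀ i, (A * U A) i j = 0 := by
    intro j hj i
    have hTT : (A * U A)ᵀ * (A * U A) = Matrix.diagonal (eigs A) := by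
      have hUt : (U A)ᵀ = star (U A) := by
        rw [Matrix.star_eq_conjTranspose, Matrix.conjTranspose_eq_transpose_of_trivial]
      calc (A * U A)ᵀ * (A * U A) = (U A)ᵀ * Aᵀ * (A * U A) := by rw [Matrix.transpose_mul]
        _ = star (U A) * (Aᵀ * A) * U A := by rw [hUt]; simp only [Matrix.mul_assoc]
        _ = Matrix.diagonal (eigs A) := hstarU
    have hsum : ∑ i, (A * U A) i j ^ 2 = 0 := by
      have : ((A * U A)ᵀ * (A * U A)) j j = ∑ i, (A * U A) i j ^ 2 := by
        rw [Matrix.mul_apply]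
        exact Finset.sum_congr rfl fun i _ => by
          rw [Matrix.transpose_apply, pow_two]
      rw [← this, hTT, Matrix.diagonal_apply_eq, hj]
    have := (Finset.sum_eq_zero_iff_of_nonneg (fun i _ => sq_nonneg ((A * U A) i j))).mp
      hsum i (Finset.mem_univ i)
    nlinarith [this, sq_nonneg ((A * U A) i j), sq_abs ((A * U A) i j)]
  refine ⟨U A * Matrix.diagonal d * star (U A), h1, h2, ?_, ?_⟩
  · have hAuD : A * U A * Matrix.diagonal d = A * U A := by
      ext i j
      rw [Matrix.mul_diagonal]
      by_cases h : eigs A j = 0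
      · rw [hcol j h i]
        simp [hdd, h]
      · simp [hdd, h]
    calc A * (U A * Matrix.diagonal d * star (U A))
        = A * U A * Matrix.diagonal d * star (U A) := by simp only [Matrix.mul_assoc]
      _ = A * U A * star (U A) := by rw [hAuD]
      _ = A := by rw [Matrix.mul_assoc, U_mul_star A, Matrix.mul_one]
  · rw [h3]
    have hrk : A.rank = (Finset.univ.filter fun j : Fin n => eigs A j ≠ 0).card :=
      rank_eq_card A
    have : ∑ j, d j = ∑ j, (if eigs A j ≠ 0 then (1 : ℝ) else 0) := by
      refine Finset.sum_congr rfl fun j _ => ?_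
      by_cases h : eigs A j = 0 <;> simp [hdd, h]
    rw [this, Finset.sum_boole, hrk]
lemma kyFan2_smul_sq_le (k : ℕ) (X : Matrix (Fin m) (Fin n) ℝ) (c : ℝ) :
    kyFan2 k (c • X) ^ 2 ≤ c ^ 2 * kyFan2 k X ^ 2 := by
  obtain ⟨P, hs, hi, ht, hattain⟩ := exists_proj_attain k (c • X)
  have h1 : kyFan2 k (c • X) ^ 2 = Matrix.trace ((c • X)ᵀ * (c • X) * P) := by
    rw [kyFan2_sq, hattain]
  have h2 : (c • X)ᵀ * (c • X) * P = (c * c) • (Xᵀ * X * P) := by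
    rw [Matrix.transpose_smul]
    rw [Matrix.smul_mul, Matrix.smul_mul, Matrix.mul_smul, Matrix.smul_mul, smul_smul]
  have h3 : Matrix.trace (Xᵀ * X * P) ≤ kyFan2 k X ^ 2 :=
    (trace_proj_le k X P hs hi ht).trans_eq (kyFan2_sq k X).symm
  rw [h1, h2, Matrix.trace_smul, smul_eq_mul]
  nlinarith [mul_self_nonneg c, h3]

lemma frobNorm_smul (c : ℝ) (A : Matrix (Fin m) (Fin n) ℝ) :
    frobNorm (c • A) = |c| * frobNorm A := by
  rw [frobNorm, frobNorm]
  have : ∑ i, ∑ j, (c • A) i j ^ 2 = c ^ 2 * ∑ i, ∑ j, A i j ^ 2 := by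
    simp only [Matrix.smul_apply, smul_eq_mul, mul_pow, Finset.mul_sum]
  rw [this, Real.sqrt_mul (sq_nonneg c), Real.sqrt_sq_eq_abs]

lemma frobInner_smul (A X : Matrix (Fin m) (Fin n) ℝ) (c : ℝ) :
    frobInner A (c • X) = c * frobInner A X := by
  simp only [frobInner, Matrix.smul_apply, smul_eq_mul, Finset.mul_sum]
  exact Finset.sum_congr rfl fun i _ => Finset.sum_congr rfl fun j _ => by ring

lemma frobNorm_pos (A : Matrix (Fin m) (Fin n) ℝ) (hA : A ≠ 0) : 0 < frobNorm A := by
  rcases (frobNorm_nonneg A).lt_or_eq with h | h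
  · exact h
  · exfalso
    apply hA
    have hs : ∑ i, ∑ j, A i j ^ 2 = 0 := by
      have := h.symm
      rw [frobNorm] at this
      have hnn : (0 : ℝ) ≤ ∑ i, ∑ j, A i j ^ 2 := by positivity
      nlinarith [Real.sq_sqrt hnn, this]
    ext i j
    have hrow := (Finset.sum_eq_zero_iff_of_nonneg
      (fun i _ => Finset.sum_nonneg fun j _ => sq_nonneg (A i j))).mp hs i (Finset.mem_univ i)
    have := (Finset.sum_eq_zero_iff_of_nonneg (fun j _ => sq_nonneg (A i j))).mp hrow j
      (Finset.mem_univ j)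
    have hz : A i j = 0 := by nlinarith [sq_nonneg (A i j)]
    simpa using hz

lemma frobNorm_zero : frobNorm (0 : Matrix (Fin m) (Fin n) ℝ) = 0 := by
  simp [frobNorm]

/-- hard direction inequality -/
lemma frobInner_le_of (k : ℕ) (A X : Matrix (Fin m) (Fin n) ℝ) (hrank : A.rank ≤ k)
    (hX : kyFan2 k X ≤ 1) : frobInner A X ≤ frobNorm A := by
  obtain ⟨P, hsym, hidem, hfix, htr⟩ := exists_proj_fix A
  have hPt : Pᵀ = P := by
    rw [← Matrix.conjTranspose_eq_transpose_of_trivial, ← Matrix.star_eq_conjTranspose, hsym]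
  have h1 : frobInner A X = frobInner A (X * P) := by
    rw [frobInner_eq_trace, frobInner_eq_trace]
    conv_lhs => rw [← hfix, Matrix.transpose_mul, hPt]
    rw [Matrix.mul_assoc P Aᵀ X, Matrix.trace_mul_comm P (Aᵀ * X), Matrix.mul_assoc Aᵀ X P]
  have h2 : frobNorm (X * P) ^ 2 = Matrix.trace (Xᵀ * X * P) := by
    have ha : frobNorm (X * P) ^ 2 = Matrix.trace ((X * P)ᵀ * (X * P)) := by
      rw [trace_tmul, frobNorm, Real.sq_sqrt (by positivity)]
      exact Finset.sum_congr rfl fun i _ => Finset.sum_congr rfl fun j _ => pow_two _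
    rw [ha, Matrix.transpose_mul, hPt]
    calc Matrix.trace (P * Xᵀ * (X * P)) = Matrix.trace (P * (Xᵀ * X * P)) := by
          simp only [Matrix.mul_assoc]
      _ = Matrix.trace (Xᵀ * X * P * P) := Matrix.trace_mul_comm _ _
      _ = Matrix.trace (Xᵀ * X * P) := by rw [Matrix.mul_assoc, hidem]
  have h3 : Matrix.trace (Xᵀ * X * P) ≤ 1 := by
    have htr' : Matrix.trace P ≤ (k : ℝ) := by
      rw [htr]
      exact_mod_cast hrank
    have := (trace_proj_le k X P hsym hidem htr').trans_eq (kyFan2_sq k X).symm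
    nlinarith [kyFan2_nonneg k X]
  have h4 : frobNorm (X * P) ≤ 1 := by
    nlinarith [frobNorm_nonneg (X * P), h2.trans_le h3]
  calc frobInner A X = frobInner A (X * P) := h1
    _ ≤ frobNorm A * frobNorm (X * P) := frobInner_le_frobNorm_mul A (X * P)
    _ ≤ frobNorm A * 1 := mul_le_mul_of_nonneg_left h4 (frobNorm_nonneg A)
    _ = frobNorm A := mul_one _
end KFAux


open KFAux in
/-- `‖A‖_{k,2}^⋆ = ‖A‖_F ↔ rank A ≤ k`. -/
theorem kyFan2Dual_eq_frobenius_iff_rank_le {m n : ℕ} (A : Matrix (Fin m) (Fin n) ℝ)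
    (k : ℕ) (hk1 : 1 ≤ k) (hk : k ≤ min m n) :
    kyFan2Dual k A = frobNorm A ↔ A.rank ≤ k := by
  classical
  set S : Set ℝ :=
    {c : ℝ | ∃ X : Matrix (Fin m) (Fin n) ℝ, kyFan2 k X ≤ 1 ∧ c = frobInner A X} with hS
  have hSdual : kyFan2Dual k A = sSup S := rfl
  have hn : 0 < n := lt_of_lt_of_le hk1 (hk.trans (min_le_right m n))
  have hub : A.rank ≤ k → ∀ c ∈ S, c ≤ frobNorm A := by
    intro hrank c hc
    obtain ⟨X, hX, rfl⟩ := hc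
    exact frobInner_le_of k A X hrank hX
  constructor
  · intro hEq
    by_contra hrank
    push_neg at hrank
    have hkn : k < n := lt_of_lt_of_le hrank (Matrix.rank_le_width A)
    have hlamk : 0 < lam A ⟨k, hkn⟩ := by
      rcases (lam_nonneg A ⟨k, hkn⟩).lt_or_eq with h | h
      · exact h
      · exfalso
        apply absurd (le_refl A.rank)
        push_neg
        calc A.rank ≤ k := ?_
          _ < A.rank := hrank
        rw [rank_eq_card A]
        have hcard : (Finset.univ.filter fun j : Fin n => eigs A j ≠ 0).card ≤
            (Finset.univ.filter fun i : Fin n => (i : ℕ) < k).card := by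
          apply Finset.card_le_card_of_injOn (fun j => (e A).symm j)
          · intro j hj
            simp only [Finset.mem_coe, Finset.mem_filter, Finset.mem_univ, true_and] at hj ⊢
            by_contra hge
            push_neg at hge
            have h1 : (⟨k, hkn⟩ : Fin n) ≤ (e A).symm j := by
              rw [Fin.le_def]
              exact hge
            have h2 : lam A ((e A).symm j) ≤ 0 := by
              rw [h]
              exact lam_antitone A h1
            exact hj (le_antisymm ((eigs_eq_lam_symm A j).trans_le h2) (eigs_nonneg A j))
          · intro a _ b _ hab
            exact (e A).symm.injective hab
        calc (Finset.univ.filter fun j : Fin n => eigs A j ≠ 0).card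
            ≤ (Finset.univ.filter fun i : Fin n => (i : ℕ) < k).card := hcard
          _ = min k n := card_filter_lt n k
          _ ≤ k := min_le_left _ _
    have hdiff : kyFan2 k A ^ 2 + lam A ⟨k, hkn⟩ ≤ frobNorm A ^ 2 := by
      rw [kyFan2_sq, frobNorm_sq]
      have hsplit : ∑ i, lam A i =
          ∑ i ∈ Finset.univ.filter (fun i : Fin n => (i : ℕ) < k), lam A i +
          ∑ i ∈ Finset.univ.filter (fun i : Fin n => ¬ (i : ℕ) < k), lam A i :=
        (Finset.sum_filter_add_sum_filter_not _ _ _).symm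
      have hmemk : (⟨k, hkn⟩ : Fin n) ∈
          Finset.univ.filter (fun i : Fin n => ¬ (i : ℕ) < k) := by
        simp
      have hle : lam A ⟨k, hkn⟩ ≤
          ∑ i ∈ Finset.univ.filter (fun i : Fin n => ¬ (i : ℕ) < k), lam A i :=
        Finset.single_le_sum (fun i _ => lam_nonneg A i) hmemk
      linarith
    have hkypos : 0 < kyFan2 k A := by
      rw [kyFan2_eq]
      apply Real.sqrt_pos.mpr
      have h0mem : (⟨0, hn⟩ : Fin n) ∈
          Finset.univ.filter (fun i : Fin n => (i : ℕ) < k) := by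
        simp only [Finset.mem_filter, Finset.mem_univ, true_and]
        exact hk1
      have h1 : lam A ⟨k, hkn⟩ ≤ lam A ⟨0, hn⟩ := by
        apply lam_antitone A
        rw [Fin.le_def]
        exact Nat.zero_le k
      have h2 : lam A ⟨0, hn⟩ ≤
          ∑ i ∈ Finset.univ.filter (fun i : Fin n => (i : ℕ) < k), lam A i :=
        Finset.single_le_sum (fun i _ => lam_nonneg A i) h0mem
      linarith
    have hlt : kyFan2 k A < frobNorm A := by
      nlinarith [frobNorm_nonneg A, kyFan2_nonneg k A]
    have hFpos : 0 < frobNorm A := hkypos.trans hlt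
    set t := kyFan2 k A with hT
    set X₀ := t⁻¹ • A with hX₀def
    have hX₀ : kyFan2 k X₀ ≤ 1 := by
      have hsq := kyFan2_smul_sq_le k A t⁻¹
      have hsq1 : kyFan2 k X₀ ^ 2 ≤ 1 := by
        have ht2 : (t⁻¹) ^ 2 * t ^ 2 = 1 := by
          field_simp
        calc kyFan2 k X₀ ^ 2 ≤ (t⁻¹) ^ 2 * kyFan2 k A ^ 2 := hsq
          _ = 1 := ht2
      nlinarith [kyFan2_nonneg k X₀]
    have hval : frobInner A X₀ = t⁻¹ * frobNorm A ^ 2 := by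
      rw [hX₀def, frobInner_smul, frobInner_self]
    have hgt : frobNorm A < frobInner A X₀ := by
      rw [hval]
      calc frobNorm A = t⁻¹ * (t * frobNorm A) := by field_simp
        _ < t⁻¹ * frobNorm A ^ 2 := by
            apply mul_lt_mul_of_pos_left _ (inv_pos.mpr hkypos)
            nlinarith
    have hBdd : BddAbove S := by
      refine ⟨frobNorm A * Real.sqrt n, ?_⟩
      rintro c ⟨X, hXk, rfl⟩
      have hXF : frobNorm X ≤ Real.sqrt n := by
        rw [frobNorm_eq]
        apply Real.sqrt_le_sqrt
        have hball : ∀ i, lam X i ≤ 1 := by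
          intro i
          have h1 : lam X i ≤ lam X ⟨0, hn⟩ := by
            apply lam_antitone X
            rw [Fin.le_def]
            exact Nat.zero_le _
          have h0mem : (⟨0, hn⟩ : Fin n) ∈
              Finset.univ.filter (fun i : Fin n => (i : ℕ) < k) := by
            simp only [Finset.mem_filter, Finset.mem_univ, true_and]
            exact hk1
          have h2 : lam X ⟨0, hn⟩ ≤
              ∑ i ∈ Finset.univ.filter (fun i : Fin n => (i : ℕ) < k), lam X i :=
            Finset.single_le_sum (fun i _ => lam_nonneg X i) h0mem
          have h3 := kyFan2_sq k X
          nlinarith [kyFan2_nonneg k X]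
        calc ∑ i, lam X i ≤ ∑ _i : Fin n, (1 : ℝ) :=
              Finset.sum_le_sum (fun i _ => hball i)
          _ = n := by simp
      calc frobInner A X ≤ frobNorm A * frobNorm X := frobInner_le_frobNorm_mul A X
        _ ≤ frobNorm A * Real.sqrt n :=
            mul_le_mul_of_nonneg_left hXF (frobNorm_nonneg A)
    have hmem : frobInner A X₀ ∈ S := ⟨X₀, hX₀, rfl⟩
    have hle := le_csSup hBdd hmem
    rw [← hSdual, hEq] at hle
    linarith
  · intro hrank
    rw [hSdual]
    refine le_antisymm (Real.sSup_le (hub hrank) (frobNorm_nonneg A)) ?_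
    by_cases hA : A = 0
    · subst hA
      rw [frobNorm_zero]
      have hmem : (0 : ℝ) ∈ S := by
        refine ⟨0, ?_, ?_⟩
        · calc kyFan2 k (0 : Matrix (Fin m) (Fin n) ℝ) ≤ frobNorm 0 := kyFan2_le_frobNorm k 0
            _ = 0 := frobNorm_zero
            _ ≤ 1 := zero_le_one
        · simp [frobInner]
      exact le_csSup ⟨frobNorm 0, hub hrank⟩ hmem
    · have hF := frobNorm_pos A hA
      set X₁ := (frobNorm A)⁻¹ • A with hX₁def
      have h1 : kyFan2 k X₁ ≤ 1 := by
        calc kyFan2 k X₁ ≤ frobNorm X₁ := kyFan2_le_frobNorm k X₁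
          _ = |(frobNorm A)⁻¹| * frobNorm A := by rw [hX₁def, frobNorm_smul]
          _ = 1 := by
              rw [abs_of_pos (inv_pos.mpr hF)]
              field_simp
      have h2 : frobInner A X₁ = frobNorm A := by
        rw [hX₁def, frobInner_smul, frobInner_self, pow_two, ← mul_assoc,
          inv_mul_cancel₀ hF.ne', one_mul]
      exact le_csSup ⟨frobNorm A, hub hrank⟩ ⟨X₁, h1, h2.symm⟩
end

section
/- Let 𝒜 : ℝ^{m×n} → ℝ^p be a linear map whose 2k-restricted isometry constant satisfies δ_{2k}(𝒜) < 1. If X₀ satisfies 𝒜(X₀) = b and rank(X₀) ≤ k, then X₀ is the unique matrix of rank at most k satisfying 𝒜(X) = b. -/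
open Matrix

lemma my_rank_sub_le {m n : ℕ} (A B : Matrix (Fin m) (Fin n) ℝ) :
    (A - B).rank ≤ A.rank + B.rank := by
  unfold Matrix.rank
  have hle : LinearMap.range (A - B).mulVecLin ≤
      LinearMap.range A.mulVecLin ⊔ LinearMap.range B.mulVecLin := by
    rintro x ⟨v, rfl⟩
    have : (A - B).mulVecLin v = A.mulVecLin v - B.mulVecLin v := by
      simp [Matrix.mulVecLin, Matrix.sub_mulVec]
    rw [this]
    exact Submodule.sub_mem _ (Submodule.mem_sup_left ⟨v, rfl⟩)
      (Submodule.mem_sup_right ⟨v, rfl⟩)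
  calc Module.finrank ℝ (LinearMap.range (A - B).mulVecLin)
      ≤ Module.finrank ℝ ↥(LinearMap.range A.mulVecLin ⊔ LinearMap.range B.mulVecLin) :=
        Submodule.finrank_mono hle
    _ ≤ _ := Submodule.finrank_add_le_finrank_add_finrank _ _

/-- if `δ_{2k}(𝒜) < 1`, a rank-≤k solution of `𝒜 X = b` is unique. -/
theorem unique_lowrank_solution {m n p k : ℕ} (hk1 : 1 ≤ k) (hk : k ≤ min m n)
    (𝒜 : Matrix (Fin m) (Fin n) ℝ →ₗ[ℝ] EuclideanSpace ℝ (Fin p))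
    (hδ : ∃ δ : ℝ, δ < 1 ∧ HasRIP 𝒜 (2 * k) δ)
    (b : EuclideanSpace ℝ (Fin p))
    (X₀ : Matrix (Fin m) (Fin n) ℝ) (hA : 𝒜 X₀ = b) (hr : X₀.rank ≤ k) :
    ∀ X : Matrix (Fin m) (Fin n) ℝ, 𝒜 X = b → X.rank ≤ k → X = X₀ := by
  intro X hAX hrX
  obtain ⟨δ, hδ1, hrip⟩ := hδ
  have hrank : (X - X₀).rank ≤ 2 * k := by
    have := my_rank_sub_le X X₀
    omega
  have h0 : 𝒜 (X - X₀) = 0 := by rw [map_sub, hAX, hA, sub_self]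
  have := (hrip (X - X₀) hrank).1
  rw [h0, norm_zero] at this
  have hfn : frobNorm (X - X₀) ≤ 0 := by nlinarith [this]
  have hfn0 : frobNorm (X - X₀) = 0 :=
    le_antisymm hfn (Real.sqrt_nonneg _)
  have hsum : (∑ i, ∑ j, ((X - X₀) i j) ^ 2) = 0 := by
    have hnn : 0 ≤ ∑ i, ∑ j, ((X - X₀) i j) ^ 2 :=
      Finset.sum_nonneg fun i _ => Finset.sum_nonneg fun j _ => sq_nonneg _
    have := Real.sqrt_eq_zero hnn |>.mp hfn0
    exact this
  have : X - X₀ = 0 := by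
    ext i j
    have h1 := (Finset.sum_eq_zero_iff_of_nonneg (fun i _ => Finset.sum_nonneg fun j _ => sq_nonneg ((X - X₀) i j))).mp hsum i (Finset.mem_univ i)
    have h2 := (Finset.sum_eq_zero_iff_of_nonneg (fun j _ => sq_nonneg ((X - X₀) i j))).mp h1 j (Finset.mem_univ j)
    simpa using pow_eq_zero_iff (n := 2) (by norm_num) |>.mp h2
  exact sub_eq_zero.mp this
end

section
/- Let X ≠ 0 with 𝒜(X) = b, and let α(X) = ‖X‖_{k,2}^⋆ / ‖X‖_F². Then X/‖X‖_{k,2}^⋆ maximizes ⟨X/‖X‖_{k,2}^⋆, Z⟩ over the set { (Z, z) : ‖Z‖_{k,2}^⋆ ≤ 1, 𝒜(Z) = z·b, z > 0 } (attained at Z = X/‖X‖_{k,2}^⋆, z = 1/‖X‖_{k,2}^⋆) if and only if Y = 0 minimizes Y ↦ ‖X + Y‖_{k,2}^⋆ − α(X)·⟨X, Y⟩ over { Y : 𝒜(Y) = 0 }. -/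
open Matrix

namespace CPAux

variable {m n : ℕ}

lemma svalsDesc_nonneg (A : Matrix (Fin m) (Fin n) ℝ) (i : Fin n) : 0 ≤ svalsDesc A i :=
  Real.sqrt_nonneg _

lemma svalsDesc_antitone (A : Matrix (Fin m) (Fin n) ℝ) : Antitone (svalsDesc A) := by
  intro i j hij
  exact Real.sqrt_le_sqrt (Tuple.monotone_sort _ (Fin.rev_le_rev.mpr hij))

lemma sum_sq_svalsDesc (A : Matrix (Fin m) (Fin n) ℝ) :
    ∑ i, svalsDesc A i ^ 2 = ∑ i, ∑ j, A i j ^ 2 := by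
  classical
  set hH := Matrix.isHermitian_conjTranspose_mul_self A with hHdef
  have h1 : ∀ i : Fin n, svalsDesc A i ^ 2
      = (hH.eigenvalues ∘ Tuple.sort hH.eigenvalues) i.rev := by
    intro i
    exact Real.sq_sqrt (Matrix.eigenvalues_conjTranspose_mul_self_nonneg A _)
  calc ∑ i, svalsDesc A i ^ 2
      = ∑ i, (hH.eigenvalues ∘ Tuple.sort hH.eigenvalues) i.rev :=
        Finset.sum_congr rfl fun i _ => h1 i
    _ = ∑ i, (hH.eigenvalues ∘ Tuple.sort hH.eigenvalues) i := by
        exact Fintype.sum_equiv (Fin.revPerm) _ _ (fun i => rfl)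
    _ = ∑ i, hH.eigenvalues i := Equiv.sum_comp (Tuple.sort hH.eigenvalues) hH.eigenvalues
    _ = Matrix.trace (Aᴴ * A) := by
        conv_rhs => rw [hH.spectral_theorem]
        rw [Unitary.conjStarAlgAut_apply, Matrix.trace_mul_cycle, Unitary.coe_star_mul_self, Matrix.one_mul,
          Matrix.trace_diagonal]
        simp
    _ = ∑ i, ∑ j, A i j ^ 2 := by
        rw [Matrix.trace]
        rw [Finset.sum_comm]
        refine Finset.sum_congr rfl fun i _ => ?_
        simp [Matrix.diag, Matrix.mul_apply, Matrix.conjTranspose_apply, sq]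

lemma frobNorm_nonneg (A : Matrix (Fin m) (Fin n) ℝ) : 0 ≤ frobNorm A :=
  Real.sqrt_nonneg _

lemma frobNorm_sq (A : Matrix (Fin m) (Fin n) ℝ) :
    frobNorm A ^ 2 = ∑ i, ∑ j, A i j ^ 2 := by
  rw [frobNorm]
  exact Real.sq_sqrt (by positivity)

lemma frobNorm_pos {A : Matrix (Fin m) (Fin n) ℝ} (hA : A ≠ 0) : 0 < frobNorm A := by
  rw [frobNorm]
  apply Real.sqrt_pos.mpr
  rcases lt_or_eq_of_le (show (0:ℝ) ≤ ∑ i, ∑ j, A i j ^ 2 by positivity) with h | h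
  · exact h
  · exfalso
    apply hA
    ext i j
    have hi := (Finset.sum_eq_zero_iff_of_nonneg
      (fun i _ => by positivity)).mp h.symm i (Finset.mem_univ i)
    have hj := (Finset.sum_eq_zero_iff_of_nonneg
      (fun j _ => by positivity)).mp hi j (Finset.mem_univ j)
    simpa using sq_eq_zero_iff.mp hj

lemma frobNorm_smul (c : ℝ) (A : Matrix (Fin m) (Fin n) ℝ) :
    frobNorm (c • A) = |c| * frobNorm A := by
  unfold frobNorm
  rw [← Real.sqrt_sq_eq_abs, ← Real.sqrt_mul (sq_nonneg c)]
  congr 1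
  rw [Finset.mul_sum]
  refine Finset.sum_congr rfl fun i _ => ?_
  rw [Finset.mul_sum]
  refine Finset.sum_congr rfl fun j _ => ?_
  simp [Matrix.smul_apply, mul_pow]

lemma frobInner_self (A : Matrix (Fin m) (Fin n) ℝ) : frobInner A A = frobNorm A ^ 2 := by
  rw [frobNorm_sq, frobInner]
  simp [sq]

lemma frobInner_smul_right (A B : Matrix (Fin m) (Fin n) ℝ) (c : ℝ) :
    frobInner A (c • B) = c * frobInner A B := by
  unfold frobInner
  rw [Finset.mul_sum]
  refine Finset.sum_congr rfl fun i _ => ?_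
  rw [Finset.mul_sum]
  refine Finset.sum_congr rfl fun j _ => ?_
  simp [Matrix.smul_apply]
  ring

lemma frobInner_smul_left (A B : Matrix (Fin m) (Fin n) ℝ) (c : ℝ) :
    frobInner (c • A) B = c * frobInner A B := by
  unfold frobInner
  rw [Finset.mul_sum]
  refine Finset.sum_congr rfl fun i _ => ?_
  rw [Finset.mul_sum]
  refine Finset.sum_congr rfl fun j _ => ?_
  simp [Matrix.smul_apply]
  ring

lemma frobInner_add_right (A B C : Matrix (Fin m) (Fin n) ℝ) :
    frobInner A (B + C) = frobInner A B + frobInner A C := by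
  unfold frobInner
  rw [← Finset.sum_add_distrib]
  refine Finset.sum_congr rfl fun i _ => ?_
  rw [← Finset.sum_add_distrib]
  refine Finset.sum_congr rfl fun j _ => ?_
  simp [Matrix.add_apply]
  ring

lemma frobInner_sub_right (A B C : Matrix (Fin m) (Fin n) ℝ) :
    frobInner A (B - C) = frobInner A B - frobInner A C := by
  unfold frobInner
  rw [← Finset.sum_sub_distrib]
  refine Finset.sum_congr rfl fun i _ => ?_
  rw [← Finset.sum_sub_distrib]
  refine Finset.sum_congr rfl fun j _ => ?_
  simp [Matrix.sub_apply]
  ring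

lemma kyFan2_nonneg (k : ℕ) (A : Matrix (Fin m) (Fin n) ℝ) : 0 ≤ kyFan2 k A :=
  Real.sqrt_nonneg _

lemma kyFan2_le_frobNorm (k : ℕ) (A : Matrix (Fin m) (Fin n) ℝ) :
    kyFan2 k A ≤ frobNorm A := by
  unfold kyFan2 frobNorm
  apply Real.sqrt_le_sqrt
  rw [← sum_sq_svalsDesc]
  exact Finset.sum_le_sum_of_subset_of_nonneg (Finset.filter_subset _ _)
    (fun i _ _ => sq_nonneg _)

lemma kyFan2_zero (k : ℕ) : kyFan2 k (0 : Matrix (Fin m) (Fin n) ℝ) ≤ 1 := by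
  refine (kyFan2_le_frobNorm k 0).trans ?_
  rw [frobNorm]
  simp

lemma frobInner_le_frobNorm_mul (A B : Matrix (Fin m) (Fin n) ℝ) :
    frobInner A B ≤ frobNorm A * frobNorm B := by
  have h := Real.sum_mul_le_sqrt_mul_sqrt Finset.univ
    (fun p : Fin m × Fin n => A p.1 p.2) (fun p : Fin m × Fin n => B p.1 p.2)
  rw [← Finset.univ_product_univ, Finset.sum_product, Finset.sum_product,
    Finset.sum_product] at h
  exact h

lemma frobNorm_le_sqrt_n {k : ℕ} (hk1 : 1 ≤ k) (hkn : k ≤ n)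
    {B : Matrix (Fin m) (Fin n) ℝ} (hB : kyFan2 k B ≤ 1) :
    frobNorm B ≤ Real.sqrt n := by
  have hn : 0 < n := hk1.trans hkn
  set i0 : Fin n := ⟨0, hn⟩
  have hS0 : (0:ℝ) ≤ ∑ i ∈ Finset.univ.filter (fun i : Fin n => (i : ℕ) < k),
      (svalsDesc B i) ^ 2 := Finset.sum_nonneg fun i _ => sq_nonneg _
  have hS1 : ∑ i ∈ Finset.univ.filter (fun i : Fin n => (i : ℕ) < k),
      (svalsDesc B i) ^ 2 ≤ 1 := by
    have := Real.sqrt_le_sqrt (le_of_eq (Real.sq_sqrt hS0).symm)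
    calc ∑ i ∈ Finset.univ.filter (fun i : Fin n => (i : ℕ) < k), (svalsDesc B i) ^ 2
        = kyFan2 k B ^ 2 := (Real.sq_sqrt hS0).symm
      _ ≤ 1 ^ 1 := by
          rw [one_pow]
          nlinarith [kyFan2_nonneg k B]
      _ = 1 := by norm_num
  have h0mem : i0 ∈ Finset.univ.filter (fun i : Fin n => (i : ℕ) < k) := by
    simp [i0]; omega
  have h0 : (svalsDesc B i0) ^ 2 ≤ 1 := by
    refine le_trans ?_ hS1
    exact Finset.single_le_sum (fun i _ => sq_nonneg (svalsDesc B i)) h0mem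
  have hsum : ∑ i, (svalsDesc B i) ^ 2 ≤ n := by
    calc ∑ i, (svalsDesc B i) ^ 2 ≤ ∑ _i : Fin n, (1:ℝ) := by
          refine Finset.sum_le_sum fun i _ => ?_
          have hle : svalsDesc B i ≤ svalsDesc B i0 :=
            svalsDesc_antitone B (by exact Fin.mk_le_of_le_val (Nat.zero_le _))
          nlinarith [svalsDesc_nonneg B i, svalsDesc_nonneg B i0]
      _ = n := by simp
  rw [frobNorm]
  apply Real.sqrt_le_sqrt
  rw [← sum_sq_svalsDesc]
  exact hsum

lemma dual_bddAbove {k : ℕ} (hk1 : 1 ≤ k) (hkn : k ≤ n) (A : Matrix (Fin m) (Fin n) ℝ) :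
    BddAbove {c : ℝ | ∃ X : Matrix (Fin m) (Fin n) ℝ, kyFan2 k X ≤ 1 ∧ c = frobInner A X} := by
  refine ⟨frobNorm A * Real.sqrt n, ?_⟩
  rintro c ⟨B, hB, rfl⟩
  refine (frobInner_le_frobNorm_mul A B).trans ?_
  exact mul_le_mul_of_nonneg_left (frobNorm_le_sqrt_n hk1 hkn hB) (frobNorm_nonneg A)

lemma frobInner_le_dual {k : ℕ} (hk1 : 1 ≤ k) (hkn : k ≤ n)
    (A B : Matrix (Fin m) (Fin n) ℝ) (hB : kyFan2 k B ≤ 1) :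
    frobInner A B ≤ kyFan2Dual k A :=
  le_csSup (dual_bddAbove hk1 hkn A) ⟨B, hB, rfl⟩

lemma frobNorm_le_dual {k : ℕ} (hk1 : 1 ≤ k) (hkn : k ≤ n)
    (A : Matrix (Fin m) (Fin n) ℝ) : frobNorm A ≤ kyFan2Dual k A := by
  by_cases hA : A = 0
  · subst hA
    have h0 : frobInner (0 : Matrix (Fin m) (Fin n) ℝ) 0 ≤ kyFan2Dual k 0 :=
      frobInner_le_dual hk1 hkn 0 0 (kyFan2_zero k)
    have : frobInner (0 : Matrix (Fin m) (Fin n) ℝ) 0 = 0 := by simp [frobInner]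
    rw [this] at h0
    rw [frobNorm]
    simpa using h0
  · have hF : 0 < frobNorm A := frobNorm_pos hA
    have hsc : kyFan2 k ((frobNorm A)⁻¹ • A) ≤ 1 := by
      refine (kyFan2_le_frobNorm k _).trans ?_
      rw [frobNorm_smul, abs_of_nonneg (by positivity), inv_mul_cancel₀ hF.ne']
    have h := frobInner_le_dual hk1 hkn A _ hsc
    rwa [frobInner_smul_right, frobInner_self, sq, ← mul_assoc,
      inv_mul_cancel₀ hF.ne', one_mul] at h

lemma dual_nonneg {k : ℕ} (hk1 : 1 ≤ k) (hkn : k ≤ n)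
    (A : Matrix (Fin m) (Fin n) ℝ) : 0 ≤ kyFan2Dual k A :=
  (frobNorm_nonneg A).trans (frobNorm_le_dual hk1 hkn A)

lemma dual_smul_le {k : ℕ} (hk1 : 1 ≤ k) (hkn : k ≤ n)
    (A : Matrix (Fin m) (Fin n) ℝ) {c : ℝ} (hc : 0 ≤ c) :
    kyFan2Dual k (c • A) ≤ c * kyFan2Dual k A := by
  rw [kyFan2Dual]
  apply Real.sSup_le
  · rintro x ⟨B, hB, rfl⟩
    rw [frobInner_smul_left]
    exact mul_le_mul_of_nonneg_left (frobInner_le_dual hk1 hkn A B hB) hc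
  · exact mul_nonneg hc (dual_nonneg hk1 hkn A)

end CPAux

/-- `(X/‖X‖_{k,2}^⋆, 1/‖X‖_{k,2}^⋆)` maximizes `⟨X/‖X‖_{k,2}^⋆, Z⟩`
over `{(Z,z) : ‖Z‖_{k,2}^⋆ ≤ 1, 𝒜 Z = z b, z > 0}` iff `Y = 0` minimizes
`‖X+Y‖_{k,2}^⋆ − α(X)⟨X,Y⟩` over `{Y : 𝒜 Y = 0}`, where `α(X) = ‖X‖_{k,2}^⋆/‖X‖_F²`. -/


theorem critical_point_iff {m n p k : ℕ} (hk1 : 1 ≤ k) (hk : k ≤ min m n)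
    (𝒜 : Matrix (Fin m) (Fin n) ℝ →ₗ[ℝ] EuclideanSpace ℝ (Fin p))
    (b : EuclideanSpace ℝ (Fin p)) (hb : b ≠ 0)
    (X : Matrix (Fin m) (Fin n) ℝ) (hX : X ≠ 0) (hAX : 𝒜 X = b) :
    ((∀ (Z : Matrix (Fin m) (Fin n) ℝ) (z : ℝ),
        kyFan2Dual k Z ≤ 1 → 𝒜 Z = z • b → 0 < z →
        frobInner ((kyFan2Dual k X)⁻¹ • X) Z ≤
          frobInner ((kyFan2Dual k X)⁻¹ • X) ((kyFan2Dual k X)⁻¹ • X)) ↔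
      (∀ Y : Matrix (Fin m) (Fin n) ℝ, 𝒜 Y = 0 →
        kyFan2Dual k X ≤
          kyFan2Dual k (X + Y) - (kyFan2Dual k X / frobNorm X ^ 2) * frobInner X Y)) := by
  have hkn : k ≤ n := hk.trans (min_le_right m n)
  set d := kyFan2Dual k X with hddef
  set F := frobNorm X with hFdef
  have hF : 0 < F := CPAux.frobNorm_pos hX
  have hF2 : 0 < F ^ 2 := by positivity
  have hd : 0 < d := hF.trans_le (CPAux.frobNorm_le_dual hk1 hkn X)
  constructor
  · intro h Y hY
    set W := X + Y with hWdef
    have hAW : 𝒜 W = b := by rw [hWdef, map_add, hAX, hY, add_zero]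
    have hW : W ≠ 0 := by
      intro h0
      apply hb
      rw [← hAW, h0, map_zero]
    set D := kyFan2Dual k W with hDdef
    have hD : 0 < D := (CPAux.frobNorm_pos hW).trans_le (CPAux.frobNorm_le_dual hk1 hkn W)
    have hZ1 : kyFan2Dual k (D⁻¹ • W) ≤ 1 := by
      refine (CPAux.dual_smul_le hk1 hkn W (by positivity)).trans ?_
      rw [← hDdef, inv_mul_cancel₀ hD.ne']
    have hAZ : 𝒜 (D⁻¹ • W) = D⁻¹ • b := by rw [LinearMap.map_smul, hAW]
    have hkey := h (D⁻¹ • W) D⁻¹ hZ1 hAZ (by positivity)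
    rw [CPAux.frobInner_smul_left, CPAux.frobInner_smul_left, CPAux.frobInner_smul_right,
      CPAux.frobInner_smul_right, CPAux.frobInner_self, ← hFdef] at hkey
    have hkey2 : D⁻¹ * frobInner X W ≤ d⁻¹ * F ^ 2 :=
      le_of_mul_le_mul_left (by linarith [hkey]) (inv_pos.mpr hd)
    have hIW : frobInner X W = F ^ 2 + frobInner X Y := by
      rw [hWdef, CPAux.frobInner_add_right, CPAux.frobInner_self, hFdef]
    set t := frobInner X Y with htdef
    rw [hIW] at hkey2
    have hkey3 : (F ^ 2 + t) * d ≤ F ^ 2 * D := by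
      rw [inv_mul_eq_div, inv_mul_eq_div] at hkey2
      exact (div_le_div_iff₀ hD hd).mp hkey2
    have h2 : d * t / F ^ 2 ≤ D - d := by
      rw [div_le_iff₀ hF2]
      nlinarith [hkey3]
    have e : d / F ^ 2 * t = d * t / F ^ 2 := by ring
    rw [e]
    linarith [h2]
  · intro h Z z hZ hAZ hz
    set Y := z⁻¹ • Z - X with hYdef
    have hAY : 𝒜 Y = 0 := by
      rw [hYdef, map_sub, LinearMap.map_smul, hAZ, smul_smul, inv_mul_cancel₀ hz.ne', one_smul, hAX,
        sub_self]
    have hXY : X + Y = z⁻¹ • Z := by rw [hYdef]; abel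
    have hkey := h Y hAY
    rw [hXY] at hkey
    set c := frobInner X Z with hcdef
    have hIY : frobInner X Y = z⁻¹ * c - F ^ 2 := by
      rw [hYdef, CPAux.frobInner_sub_right, CPAux.frobInner_smul_right, CPAux.frobInner_self,
        hcdef, hFdef]
    rw [hIY] at hkey
    have hDz : kyFan2Dual k (z⁻¹ • Z) ≤ z⁻¹ := by
      refine (CPAux.dual_smul_le hk1 hkn Z (by positivity)).trans ?_
      calc z⁻¹ * kyFan2Dual k Z ≤ z⁻¹ * 1 :=
            mul_le_mul_of_nonneg_left hZ (by positivity)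
        _ = z⁻¹ := mul_one _
    set u := z⁻¹ with hudef
    have hu : 0 < u := by positivity
    have expand : d / F ^ 2 * (u * c - F ^ 2) = d / F ^ 2 * (u * c) - d := by
      rw [mul_sub, div_mul_cancel₀ _ hF2.ne']
    have step3 : d / F ^ 2 * (u * c) ≤ u := by
      have : d / F ^ 2 * (u * c - F ^ 2) ≤ u - d := by linarith [hkey, hDz]
      linarith [expand ▸ this]
    have step4 : d / F ^ 2 * c ≤ 1 := by
      have e2 : d / F ^ 2 * (u * c) = u * (d / F ^ 2 * c) := by ring
      rw [e2] at step3
      have := le_of_mul_le_mul_left (by linarith [step3] : u * (d / F ^ 2 * c) ≤ u * 1) hu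
      linarith [this]
    have step5 : c * d ≤ F ^ 2 := by
      have e3 : d / F ^ 2 * c = c * d / F ^ 2 := by ring
      rw [e3, div_le_one hF2] at step4
      exact step4
    rw [CPAux.frobInner_smul_left, CPAux.frobInner_smul_left, CPAux.frobInner_smul_right,
      CPAux.frobInner_self, ← hFdef, ← hcdef]
    refine mul_le_mul_of_nonneg_left ?_ (by positivity)
    have e4 : d⁻¹ * F ^ 2 = F ^ 2 / d := by ring
    rw [e4, le_div_iff₀ hd]
    exact step5
end
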